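/- For any σ in R_n^B with k modular runs, the orbit of σ under valley-hopping has descent generating polynomial ∑_{τ∈Orb(σ)} x^{des(τ)} = (2x)^{k-1} (1+x)^{n-2k+1}. -/

import Mathlib

/-- `w` is a signed permutation of length n: a list of nonzero integers whose
absolute values form a permutation of {1,...,n}. -/
def IsSignedPerm (n : ℕ) (w : List ℤ) : Prop :=
  w.length = n ∧ (w.map Int.natAbs).Perm (List.range' 1 n)

/-- Position `i` is the bottom of a modular run (mrun) of `w`: either `i = 0`
or the previous entry is larger in absolute value. -/
def IsBottom (w : List ℤ) (i : ℕ) : Prop :=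
  i = 0 ∨ (w.getD i 0).natAbs < (w.getD (i - 1) 0).natAbs

instance (w : List ℤ) (i : ℕ) : Decidable (IsBottom w i) := by
  unfold IsBottom; infer_instance

/-- `w ∈ R_n^B`: `w` is a signed permutation of length n which is the flattening of a
type B merging-free partition without zero block; equivalently the bottoms of its
mruns are positive and increasing, and the absolute value of the top of each mrun
exceeds the bottom of the following mrun. -/
def MemR (n : ℕ) (w : List ℤ) : Prop :=
  IsSignedPerm n w ∧
  (∀ i, i < n → IsBottom w i → 0 < w.getD i 0) ∧
  (∀ i j, i < j → j < n → IsBottom w i → IsBottom w j → w.getD i 0 < w.getD j 0) ∧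
  (∀ j, 0 < j → j < n → IsBottom w j → w.getD j 0 < ((w.getD (j - 1) 0).natAbs : ℤ))

/-- The number of descents of `w`: positions i with `w_i > w_{i+1}`. -/
def des (w : List ℤ) : ℕ :=
  ((List.range (w.length - 1)).filter
    (fun i => decide (w.getD (i + 1) 0 < w.getD i 0))).length

/-- The major index of `w`: sum of the (1-based) descent positions. -/
def maj (w : List ℤ) : ℕ :=
  ∑ i ∈ Finset.range (w.length - 1),
    if w.getD (i + 1) 0 < w.getD i 0 then i + 1 else 0

/-- The number of modular runs (mruns) of `w`. -/
def numRuns (w : List ℤ) : ℕ :=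
  ((List.range w.length).filter (fun i => decide (IsBottom w i))).length

/-- `d n k`: the number of permutations in `R_n^B` having `k` descents. -/
noncomputable def dcount (n k : ℕ) : ℕ :=
  Nat.card {w : List ℤ // MemR n w ∧ des w = k}

/-- `τ` lies in the valley-hopping orbit of `σ`: same absolute values everywhere,
and the same (positive) entries at the bottoms of the mruns of `σ`. -/
def InOrb (σ τ : List ℤ) : Prop :=
  τ.length = σ.length ∧ ∀ i, i < σ.length →
    (τ.getD i 0).natAbs = (σ.getD i 0).natAbs ∧
    (IsBottom σ i → τ.getD i 0 = σ.getD i 0)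

namespace VH
open Finset

/-- The sign-flipped version of `σ` determined by a set `S` of positions. -/
def tauOf (σ : List ℤ) (S : Finset ℕ) : List ℤ :=
  (List.range σ.length).map fun i =>
    if i ∈ S then -(((σ.getD i 0).natAbs : ℤ)) else ((σ.getD i 0).natAbs : ℤ)

lemma tauOf_length (σ : List ℤ) (S : Finset ℕ) : (tauOf σ S).length = σ.length := by
  simp [tauOf]

lemma tauOf_getD (σ : List ℤ) (S : Finset ℕ) {i : ℕ} (h : i < σ.length) :
    (tauOf σ S).getD i 0 =
      if i ∈ S then -(((σ.getD i 0).natAbs : ℤ)) else ((σ.getD i 0).natAbs : ℤ) := by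
  rw [List.getD_eq_getElem _ _ (by simpa [tauOf] using h)]
  simp [tauOf]

lemma listFilter_eq (m : ℕ) (p : ℕ → Prop) [DecidablePred p] :
    ((List.range m).filter (fun i => decide (p i))).length = ((Finset.range m).filter p).card := by
  simp [Finset.range, Finset.filter, Multiset.range, Multiset.filter_coe]

lemma abs_pos {n : ℕ} {σ : List ℤ} (hσ : MemR n σ) {i : ℕ} (h : i < n) :
    0 < (σ.getD i 0).natAbs := by
  obtain ⟨⟨hlen, hperm⟩, -⟩ := hσ
  have hi : i < σ.length := by omega
  rw [List.getD_eq_getElem _ _ hi]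
  have hmem : σ[i].natAbs ∈ σ.map Int.natAbs := List.mem_map_of_mem (σ.getElem_mem hi)
  have h2 := hperm.mem_iff.mp hmem
  rw [List.mem_range'_1] at h2
  omega

lemma abs_ne {n : ℕ} {σ : List ℤ} (hσ : MemR n σ) {i j : ℕ} (hi : i < n) (hj : j < n)
    (hne : i ≠ j) : (σ.getD i 0).natAbs ≠ (σ.getD j 0).natAbs := by
  obtain ⟨⟨hlen, hperm⟩, -⟩ := hσ
  have hi' : i < σ.length := by omega
  have hj' : j < σ.length := by omega
  have hnd : (σ.map Int.natAbs).Nodup := hperm.nodup_iff.mpr (List.nodup_range' 1 Nat.one_pos)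
  intro h
  apply hne
  rw [List.getD_eq_getElem _ _ hi', List.getD_eq_getElem _ _ hj'] at h
  have h' : (σ.map Int.natAbs)[i]'(by simpa using hi') =
      (σ.map Int.natAbs)[j]'(by simpa using hj') := by
    simpa using h
  exact (List.Nodup.getElem_inj_iff hnd).mp h'

lemma nb_lt {n : ℕ} {σ : List ℤ} (hσ : MemR n σ) {i : ℕ} (hi : i < n) (h : ¬ IsBottom σ i) :
    0 < i ∧ (σ.getD (i-1) 0).natAbs < (σ.getD i 0).natAbs := by
  unfold IsBottom at h
  push_neg at h
  obtain ⟨h0, hle⟩ := h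
  have h0' : 0 < i := Nat.pos_of_ne_zero h0
  refine ⟨h0', lt_of_le_of_ne hle ?_⟩
  exact abs_ne hσ (by omega) hi (by omega)

lemma not_bottom_pred {n : ℕ} {σ : List ℤ} (hσ : MemR n σ) {j : ℕ} (h0 : 0 < j) (hj : j < n)
    (hb : IsBottom σ j) : ¬ IsBottom σ (j-1) := by
  intro hb'
  have h1 := hσ.2.1 (j-1) (by omega) hb'
  have h2 := hσ.2.2.1 (j-1) j (by omega) hj hb' hb
  have h3 := hσ.2.2.2 j h0 hj hb
  omega

end VH
theorem orbit_descent_polynomial (n : ℕ) (hn : 1 ≤ n) (σ : List ℤ) (hσ : MemR n σ)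
    (x : ℝ) :
    ∑ j ∈ Finset.range n,
        (Nat.card {τ : List ℤ // InOrb σ τ ∧ des τ = j} : ℝ) * x ^ j
      = (2 * x) ^ (numRuns σ - 1) * (1 + x) ^ (n + 1 - 2 * numRuns σ) := by
  classical
  open Finset VH in
  have hlen : σ.length = n := hσ.1.1
  set B : Finset ℕ := (Finset.range n).filter (fun i => IsBottom σ i) with hB
  set NB : Finset ℕ := (Finset.range n).filter (fun i => ¬ IsBottom σ i) with hNB
  set NBpre : Finset ℕ := NB.filter (fun i => i + 1 < n ∧ IsBottom σ (i+1)) with hNBpre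
  have hmemNB : ∀ i, i ∈ NB ↔ i < n ∧ ¬ IsBottom σ i := by
    intro i; simp [hNB]
  have hmemB : ∀ i, i ∈ B ↔ i < n ∧ IsBottom σ i := by
    intro i; simp [hB]
  have h0B : (0:ℕ) ∈ B := (hmemB 0).mpr ⟨by omega, Or.inl rfl⟩
  have hpre_sub : NBpre ⊆ NB := Finset.filter_subset _ _
  -- numRuns = B.card
  have hk : numRuns σ = B.card := by
    rw [numRuns, hlen, hB]; exact listFilter_eq n _
  -- des of tauOf as a Finset card
  have hdes : ∀ S : Finset ℕ, des (tauOf σ S) =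
      ((Finset.range (n-1)).filter
        (fun i => (tauOf σ S).getD (i+1) 0 < (tauOf σ S).getD i 0)).card := by
    intro S
    rw [des, tauOf_length, hlen]; exact listFilter_eq (n-1) _
  -- descent characterization
  have hchar : ∀ S : Finset ℕ, S ⊆ NB → ∀ i, i < n - 1 →
      ((tauOf σ S).getD (i+1) 0 < (tauOf σ S).getD i 0 ↔
        (if IsBottom σ (i+1) then i ∉ S else i+1 ∈ S)) := by
    intro S hS i hi
    have hi1 : i + 1 < n := by omega
    have hi0 : i < n := by omega
    have hi1' : i + 1 < σ.length := by omega
    have hi0' : i < σ.length := by omega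
    have ai := abs_pos hσ hi0
    have ai1 := abs_pos hσ hi1
    rw [tauOf_getD σ S hi1', tauOf_getD σ S hi0']
    by_cases hb : IsBottom σ (i+1)
    · have h1S : i + 1 ∉ S := fun h => ((hmemNB (i+1)).mp (hS h)).2 hb
      have hpos1 : 0 < σ.getD (i+1) 0 := hσ.2.1 _ hi1 hb
      have htop' := hσ.2.2.2 (i+1) (by omega) hi1 hb
      simp only [Nat.add_sub_cancel] at htop'
      rw [if_pos hb, if_neg h1S]
      constructor
      · intro hd hiS
        rw [if_pos hiS] at hd
        omega
      · intro hiS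
        rw [if_neg hiS]
        omega
    · obtain ⟨hip, hlt⟩ := nb_lt hσ hi1 hb
      simp only [Nat.add_sub_cancel] at hlt
      rw [if_neg hb]
      constructor
      · intro hd
        by_contra h1S
        rw [if_neg h1S] at hd
        split_ifs at hd <;> omega
      · intro h1S
        rw [if_pos h1S]
        split_ifs <;> omega
  -- descent count
  have hcount : ∀ S : Finset ℕ, S ⊆ NB →
      des (tauOf σ S) = (NBpre \ S).card + S.card := by
    intro S hS
    rw [hdes S]
    rw [← Finset.card_filter_add_card_filter_not
      (p := fun i => IsBottom σ (i+1)) (s := (Finset.range (n-1)).filter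
        (fun i => (tauOf σ S).getD (i+1) 0 < (tauOf σ S).getD i 0))]
    congr 1
    · congr 1
      ext i
      simp only [Finset.mem_filter, Finset.mem_range, Finset.mem_sdiff]
      constructor
      · rintro ⟨⟨hr, hd⟩, hb⟩
        have hns : i ∉ S := by
          have := (hchar S hS i hr).mp hd
          rwa [if_pos hb] at this
        refine ⟨Finset.mem_filter.mpr ⟨(hmemNB i).mpr ⟨by omega, ?_⟩, by omega, hb⟩, hns⟩
        have := not_bottom_pred hσ (j := i+1) (by omega) (by omega) hb
        simpa using this
      · rintro ⟨hpre, hns⟩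
        obtain ⟨hiNB, hi1, hb⟩ := Finset.mem_filter.mp hpre
        refine ⟨⟨by omega, ?_⟩, hb⟩
        rw [hchar S hS i (by omega), if_pos hb]
        exact hns
    · apply Finset.card_bij (fun i _ => i + 1)
      · intro a ha
        simp only [Finset.mem_filter, Finset.mem_range] at ha
        obtain ⟨⟨hr, hd⟩, hb⟩ := ha
        have := (hchar S hS a hr).mp hd
        rwa [if_neg hb] at this
      · intro a _ b _ h; omega
      · intro j hj
        have hjNB := (hmemNB j).mp (hS hj)
        obtain ⟨hjp, -⟩ := nb_lt hσ hjNB.1 hjNB.2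
        obtain ⟨i, rfl⟩ : ∃ i, j = i + 1 := ⟨j - 1, by omega⟩
        refine ⟨i, ?_, rfl⟩
        simp only [Finset.mem_filter, Finset.mem_range]
        refine ⟨⟨by omega, ?_⟩, hjNB.2⟩
        rw [hchar S hS i (by omega), if_neg hjNB.2]
        exact hj
  -- cardinalities
  have hBNB : B.card + NB.card = n := by
    rw [hB, hNB, Finset.card_filter_add_card_filter_not, Finset.card_range]
  have hB1 : 1 ≤ B.card := Finset.card_pos.mpr ⟨0, h0B⟩
  have hpre_card : NBpre.card = B.card - 1 := by
    have : NBpre.card = (B.erase 0).card := by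
      apply Finset.card_bij (fun i _ => i + 1)
      · intro a ha
        obtain ⟨haNB, ha1, hab⟩ := Finset.mem_filter.mp ha
        exact Finset.mem_erase.mpr ⟨by omega, (hmemB _).mpr ⟨ha1, hab⟩⟩
      · intro a _ b _ h; omega
      · intro j hj
        obtain ⟨hj0, hjB⟩ := Finset.mem_erase.mp hj
        obtain ⟨hjn, hjb⟩ := (hmemB j).mp hjB
        have hj0' : 0 < j := Nat.pos_of_ne_zero hj0
        obtain ⟨i, rfl⟩ : ∃ i, j = i + 1 := ⟨j - 1, by omega⟩
        refine ⟨i, ?_, rfl⟩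
        refine Finset.mem_filter.mpr ⟨(hmemNB i).mpr ⟨by omega, ?_⟩, hjn, hjb⟩
        have := not_bottom_pred hσ (j := i+1) (by omega) hjn hjb
        simpa using this
    rw [this, Finset.card_erase_of_mem h0B]
  -- orbit ↔ subsets
  have horb_eq : ∀ τ : List ℤ, InOrb σ τ →
      tauOf σ (NB.filter (fun i => τ.getD i 0 < 0)) = τ := by
    intro τ hτ
    apply List.ext_getElem (by rw [tauOf_length, hτ.1])
    intro i h1 h2
    have hi' : i < σ.length := by rwa [tauOf_length] at h1
    have hi : i < n := by omega
    rw [← List.getD_eq_getElem (tauOf σ _) 0 h1, ← List.getD_eq_getElem τ 0 h2,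
      tauOf_getD σ _ hi']
    have habs := (hτ.2 i hi').1
    by_cases hmem : i ∈ NB.filter (fun i => τ.getD i 0 < 0)
    · rw [if_pos hmem]
      have hneg : τ.getD i 0 < 0 := (Finset.mem_filter.mp hmem).2
      omega
    · rw [if_neg hmem]
      by_cases hb : IsBottom σ i
      · have heq : τ.getD i 0 = σ.getD i 0 := (hτ.2 i hi').2 hb
        have hp : 0 < σ.getD i 0 := hσ.2.1 i hi hb
        omega
      · have hge : ¬ τ.getD i 0 < 0 := fun h =>
          hmem (Finset.mem_filter.mpr ⟨(hmemNB i).mpr ⟨hi, hb⟩, h⟩)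
        have := abs_pos hσ hi
        omega
  have horb : ∀ S : Finset ℕ, S ⊆ NB → InOrb σ (tauOf σ S) := by
    intro S hS
    refine ⟨tauOf_length σ S, fun i hi => ?_⟩
    have hi' : i < n := by omega
    rw [tauOf_getD σ S hi]
    have := abs_pos hσ hi'
    constructor
    · split_ifs <;> omega
    · intro hb
      have hiS : i ∉ S := fun h => ((hmemNB i).mp (hS h)).2 hb
      rw [if_neg hiS]
      have := hσ.2.1 i hi' hb
      omega
  have hS_eq : ∀ S : Finset ℕ, S ⊆ NB →
      NB.filter (fun i => (tauOf σ S).getD i 0 < 0) = S := by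
    intro S hS
    ext i
    simp only [Finset.mem_filter]
    constructor
    · rintro ⟨hiNB, hneg⟩
      have hi : i < n := ((hmemNB i).mp hiNB).1
      rw [tauOf_getD σ S (by omega)] at hneg
      by_contra hiS
      rw [if_neg hiS] at hneg
      have := abs_pos hσ hi
      omega
    · intro hiS
      refine ⟨hS hiS, ?_⟩
      have hi : i < n := ((hmemNB i).mp (hS hiS)).1
      rw [tauOf_getD σ S (by omega), if_pos hiS]
      have := abs_pos hσ hi
      omega
  have key : ∀ j, (Nat.card {τ : List ℤ // InOrb σ τ ∧ des τ = j})
      = (NB.powerset.filter (fun S => des (tauOf σ S) = j)).card := by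
    intro j
    rw [← Nat.card_eq_finsetCard]
    apply Nat.card_congr
    refine ⟨fun τ => ⟨NB.filter (fun i => τ.1.getD i 0 < 0), ?_⟩,
      fun S => ⟨tauOf σ S.1, ?_⟩, ?_, ?_⟩
    · refine Finset.mem_filter.mpr ⟨Finset.mem_powerset.mpr (Finset.filter_subset _ _), ?_⟩
      rw [horb_eq τ.1 τ.2.1]
      exact τ.2.2
    · have hSsub : S.1 ⊆ NB := Finset.mem_powerset.mp (Finset.mem_filter.mp S.2).1
      exact ⟨horb S.1 hSsub, (Finset.mem_filter.mp S.2).2⟩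
    · intro τ
      exact Subtype.ext (horb_eq τ.1 τ.2.1)
    · intro S
      exact Subtype.ext (hS_eq S.1 (Finset.mem_powerset.mp (Finset.mem_filter.mp S.2).1))
  -- assemble
  have hmaps : ∀ S ∈ NB.powerset, des (tauOf σ S) ∈ Finset.range n := by
    intro S hS
    have hS' : S ⊆ NB := Finset.mem_powerset.mp hS
    rw [Finset.mem_range, hcount S hS']
    have h1 : (NBpre \ S).card ≤ NBpre.card := Finset.card_le_card (Finset.sdiff_subset)
    have h2 : S.card ≤ NB.card := Finset.card_le_card hS'
    omega
  calc ∑ j ∈ Finset.range n,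
        (Nat.card {τ : List ℤ // InOrb σ τ ∧ des τ = j} : ℝ) * x ^ j
      = ∑ j ∈ Finset.range n, ∑ S ∈ NB.powerset.filter (fun S => des (tauOf σ S) = j),
          x ^ des (tauOf σ S) := by
        refine Finset.sum_congr rfl fun j _ => ?_
        rw [key j, Finset.sum_congr rfl
          (fun S hS => by rw [(Finset.mem_filter.mp hS).2]), Finset.sum_const,
          nsmul_eq_mul]
    _ = ∑ S ∈ NB.powerset, x ^ des (tauOf σ S) :=
        Finset.sum_fiberwise_of_maps_to hmaps _
    _ = ∑ S ∈ NB.powerset, (∏ _i ∈ S, x) * ∏ i ∈ NB \ S, (if i ∈ NBpre then x else 1) := by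
        refine Finset.sum_congr rfl fun S hS => ?_
        have hS' : S ⊆ NB := Finset.mem_powerset.mp hS
        rw [hcount S hS', Finset.prod_const, Finset.prod_ite (f := fun _ => x)
          (g := fun _ => (1:ℝ)), Finset.prod_const, Finset.prod_const]
        have hfe : (NB \ S).filter (fun i => i ∈ NBpre) = NBpre \ S := by
          ext i
          simp only [Finset.mem_filter, Finset.mem_sdiff]
          exact ⟨fun ⟨⟨_, h2⟩, h3⟩ => ⟨h3, h2⟩, fun ⟨h1, h2⟩ => ⟨⟨hpre_sub h1, h2⟩, h1⟩⟩
        rw [hfe, one_pow, mul_one, pow_add]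
        ring
    _ = ∏ i ∈ NB, (x + if i ∈ NBpre then x else 1) := (Finset.prod_add _ _ _).symm
    _ = ∏ i ∈ NB, (if i ∈ NBpre then 2*x else 1+x) := by
        refine Finset.prod_congr rfl fun i _ => ?_
        split_ifs <;> ring
    _ = (2*x) ^ NBpre.card * (1+x) ^ (NB.card - NBpre.card) := by
        rw [Finset.prod_ite (f := fun _ => 2*x) (g := fun _ => 1+x), Finset.prod_const,
          Finset.prod_const]
        have h1 : NB.filter (fun i => i ∈ NBpre) = NBpre := by
          ext i
          simp only [Finset.mem_filter]
          exact ⟨fun h => h.2, fun h => ⟨hpre_sub h, h⟩⟩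
        have h2 : NB.filter (fun i => ¬ i ∈ NBpre) = NB \ NBpre := by
          rw [Finset.sdiff_eq_filter]
        rw [h1, h2, Finset.card_sdiff_of_subset hpre_sub]
    _ = (2 * x) ^ (numRuns σ - 1) * (1 + x) ^ (n + 1 - 2 * numRuns σ) := by
        have e1 : NBpre.card = numRuns σ - 1 := by omega
        have e2 : NB.card - NBpre.card = n + 1 - 2 * numRuns σ := by omega
        rw [e2, e1]
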